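/- The map code₃ restricted to permutations of [n] beginning with 1 is a bijection onto the set C_{n−2} of (n−2)-tuples (a₁,...,a_{n−2}) of non-negative integers with aᵢ ≤ n−1−i for all i. -/

import Mathlib

open Finset
open scoped Classical

/-- entry of a permutation of `Fin n` at 0-indexed position `i` (0-based values). -/
def ent {n : ℕ} (σ : Equiv.Perm (Fin n)) (i : ℕ) : ℕ :=
  if h : i < n then (σ ⟨i, h⟩ : ℕ) else 0

/-- the triple `(a, b, c)` of distinct values, reduced to a permutation in `S₃`, is odd. -/
def odd3 (a b c : ℕ) : Prop :=
  ((if b < a then 1 else 0) + (if c < a then 1 else 0) + (if c < b then 1 else 0)) % 2 = 1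

instance (a b c : ℕ) : Decidable (odd3 a b c) := by
  unfold odd3; infer_instance

/-- 3-descent set, 0-indexed positions (position `i` here is paper position `i+1`). -/
def D3 {n : ℕ} (σ : Equiv.Perm (Fin n)) : Finset ℕ :=
  (Finset.range (n - 2)).filter (fun i => odd3 (ent σ i) (ent σ (i + 1)) (ent σ (i + 2)))

/-- alternating descent set, 0-indexed positions. -/
def altD {n : ℕ} (σ : Equiv.Perm (Fin n)) : Finset ℕ :=
  (Finset.range (n - 1)).filter (fun i =>
    (Even i ∧ ent σ (i + 1) < ent σ i) ∨ (¬ Even i ∧ ent σ i < ent σ (i + 1)))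

/-- number of up-down alternating permutations of `[n]` (the Euler number `Eₙ`). -/
noncomputable def EulerNum (n : ℕ) : ℕ :=
  ((Finset.univ : Finset (Equiv.Perm (Fin n))).filter (fun τ =>
    ∀ i ∈ Finset.range (n - 1),
      (Even i ∧ ent τ i < ent τ (i + 1)) ∨ (¬ Even i ∧ ent τ (i + 1) < ent τ i))).card

/-- `c³ᵢ(σ)`, 0-indexed: number of `j > i+1` with `σᵢ σᵢ₊₁ σⱼ` odd. -/
def c3 {n : ℕ} (σ : Equiv.Perm (Fin n)) (i : ℕ) : ℕ :=
  ((Finset.range n).filter (fun j => i + 1 < j ∧ odd3 (ent σ i) (ent σ (i + 1)) (ent σ j))).card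

/-- `ĉᵢ(σ)`, 0-indexed. -/
def chat {n : ℕ} (σ : Equiv.Perm (Fin n)) (i : ℕ) : ℕ :=
  ((Finset.range n).filter (fun j => i < j ∧
    ((Even i ∧ ent σ j < ent σ i) ∨ (¬ Even i ∧ ent σ i < ent σ j)))).card

/-- `i₃` of an arbitrary word `f 0, f 1, ..., f (m-1)`. -/
def i3f (m : ℕ) (f : ℕ → ℕ) : ℕ :=
  ((Finset.range m ×ˢ Finset.range m).filter (fun p =>
    p.1 + 1 < p.2 ∧ odd3 (f p.1) (f (p.1 + 1)) (f p.2))).card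

/-- the 3-inversion statistic `i₃`. -/
def i3 {n : ℕ} (σ : Equiv.Perm (Fin n)) : ℕ := i3f n (ent σ)

/-- the word `1*σ` (0-based values): `0, σ₀+1, σ₁+1, ...`. -/
def oneStar {n : ℕ} (σ : Equiv.Perm (Fin n)) : ℕ → ℕ :=
  fun i => if i = 0 then 0 else ent σ (i - 1) + 1

/-- number of alternating inversions `î(σ)`. -/
def altInv {n : ℕ} (σ : Equiv.Perm (Fin n)) : ℕ :=
  ((Finset.range n ×ˢ Finset.range n).filter (fun p => p.1 < p.2 ∧
    ((Even p.1 ∧ ent σ p.2 < ent σ p.1) ∨ (¬ Even p.1 ∧ ent σ p.1 < ent σ p.2)))).card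

/-- number of inversions of the word `f 0, ..., f (m-1)`. -/
def invf (m : ℕ) (f : ℕ → ℕ) : ℕ :=
  ((Finset.range m ×ˢ Finset.range m).filter (fun p => p.1 < p.2 ∧ f p.2 < f p.1)).card

/-- major index of the word `f 0, ..., f (m-1)` (descent at 0-indexed `i` contributes `i+1`). -/
def majf (m : ℕ) (f : ℕ → ℕ) : ℕ :=
  ∑ i ∈ (Finset.range (m - 1)).filter (fun i => f (i + 1) < f i), (i + 1)

/-- `Â(m, r)`: number of permutations of `[m]` with `r - 1` alternating descents. -/
def Ahat (m r : ℕ) : ℕ :=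
  ((Finset.univ : Finset (Equiv.Perm (Fin m))).filter (fun σ => (altD σ).card + 1 = r)).card

/-- down-up alternating: `σ₁ > σ₂ < σ₃ > ⋯`. -/
def DownUp {n : ℕ} (σ : Equiv.Perm (Fin n)) : Prop :=
  ∀ i ∈ Finset.range (n - 1),
    (Even i ∧ ent σ (i + 1) < ent σ i) ∨ (¬ Even i ∧ ent σ i < ent σ (i + 1))

instance {n : ℕ} (σ : Equiv.Perm (Fin n)) : Decidable (DownUp σ) := by
  unfold DownUp; infer_instance

/-- up-down alternating: `σ₁ < σ₂ > σ₃ < ⋯`. -/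
def UpDown {n : ℕ} (σ : Equiv.Perm (Fin n)) : Prop :=
  ∀ i ∈ Finset.range (n - 1),
    (Even i ∧ ent σ i < ent σ (i + 1)) ∨ (¬ Even i ∧ ent σ (i + 1) < ent σ i)


section Aux

variable {n : ℕ}

lemma ent_def (σ : Equiv.Perm (Fin n)) {i : ℕ} (h : i < n) : ent σ i = (σ ⟨i, h⟩ : ℕ) :=
  dif_pos h

lemma ent_lt (σ : Equiv.Perm (Fin n)) {i : ℕ} (h : i < n) : ent σ i < n := by
  rw [ent_def σ h]; exact (σ ⟨i, h⟩).isLt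

lemma ent_inj (σ : Equiv.Perm (Fin n)) {i j : ℕ} (hi : i < n) (hj : j < n)
    (h : ent σ i = ent σ j) : i = j := by
  rw [ent_def σ hi, ent_def σ hj] at h
  have h2 : (⟨i, hi⟩ : Fin n) = ⟨j, hj⟩ := σ.injective (Fin.val_injective h)
  exact congrArg Fin.val h2

lemma ent_surj (σ : Equiv.Perm (Fin n)) {v : ℕ} (hv : v < n) : ∃ j, j < n ∧ ent σ j = v := by
  refine ⟨(σ.symm ⟨v, hv⟩ : ℕ), (σ.symm ⟨v, hv⟩).isLt, ?_⟩
  rw [ent_def σ (σ.symm ⟨v, hv⟩).isLt]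
  simp

lemma odd3_iff {a b v : ℕ} (hab : a ≠ b) (hav : a ≠ v) (hbv : b ≠ v) :
    odd3 a b v ↔ ((a < b ∧ a < v ∧ v < b) ∨ (b < a ∧ (v < b ∨ a < v))) := by
  unfold odd3
  constructor
  · intro h'
    split_ifs at h' <;> omega
  · intro h'
    split_ifs <;> omega

/-- set of values of `σ` at positions `≥ m`. -/
def Rset (σ : Equiv.Perm (Fin n)) (m : ℕ) : Finset ℕ := (Finset.Ico m n).image (ent σ)

lemma Rset_eq (σ : Equiv.Perm (Fin n)) (m : ℕ) (hm : m ≤ n) :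
    Rset σ m = (Finset.range n) \ ((Finset.range m).image (ent σ)) := by
  ext v
  simp only [Rset, mem_image, mem_Ico, mem_sdiff, mem_range]
  constructor
  · rintro ⟨j, ⟨hmj, hjn⟩, rfl⟩
    refine ⟨ent_lt σ hjn, ?_⟩
    rintro ⟨j', hj', hj'e⟩
    have := ent_inj σ (lt_of_lt_of_le hj' hm) hjn hj'e
    omega
  · rintro ⟨hv, hnot⟩
    obtain ⟨j, hj, rfl⟩ := ent_surj σ hv
    refine ⟨j, ⟨?_, hj⟩, rfl⟩
    by_contra h
    exact hnot ⟨j, by omega, rfl⟩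

lemma Rset_congr (σ τ : Equiv.Perm (Fin n)) (m : ℕ) (hm : m ≤ n)
    (h : ∀ j < m, ent σ j = ent τ j) : Rset σ m = Rset τ m := by
  rw [Rset_eq σ m hm, Rset_eq τ m hm]
  congr 1
  apply Finset.image_congr
  intro j hj
  exact h j (by simpa using hj)

lemma c3_eq (σ : Equiv.Perm (Fin n)) (k : ℕ) (hk : k + 2 ≤ n) :
    c3 σ k = (((Rset σ (k+1)).erase (ent σ (k+1))).filter
      (fun v => odd3 (ent σ k) (ent σ (k+1)) v)).card := by
  unfold c3
  have h1 : (Finset.range n).filter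
        (fun j => k + 1 < j ∧ odd3 (ent σ k) (ent σ (k+1)) (ent σ j))
      = (Finset.Ico (k+2) n).filter (fun j => odd3 (ent σ k) (ent σ (k+1)) (ent σ j)) := by
    ext j
    simp only [mem_filter, mem_range, mem_Ico]
    constructor
    · rintro ⟨hj, hk', hP⟩; exact ⟨⟨by omega, hj⟩, hP⟩
    · rintro ⟨⟨hk', hj⟩, hP⟩; exact ⟨hj, by omega, hP⟩
  have hb_not : ent σ (k+1) ∉ (Finset.Ico (k+2) n).image (ent σ) := by
    rintro hmem
    obtain ⟨j, hj, hje⟩ := Finset.mem_image.mp hmem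
    rw [Finset.mem_Ico] at hj
    have := ent_inj σ hj.2 (by omega : k + 1 < n) hje
    omega
  have h2 : ((Rset σ (k+1)).erase (ent σ (k+1))) = (Finset.Ico (k+2) n).image (ent σ) := by
    unfold Rset
    rw [show Finset.Ico (k + 1) n = insert (k + 1) (Finset.Ico (k + 2) n) from
      (Finset.insert_Ico_add_one_left_eq_Ico (show k + 1 < n by omega)).symm]
    rw [Finset.image_insert, Finset.erase_insert hb_not]
  rw [h1, h2, Finset.filter_image]
  rw [Finset.card_image_of_injOn]
  intro x hx y hy hxy
  simp only [Finset.coe_filter, Set.mem_setOf_eq, Finset.mem_Ico] at hx hy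
  exact ent_inj σ hx.1.2 hy.1.2 hxy

lemma c3_le (σ : Equiv.Perm (Fin n)) (k : ℕ) : c3 σ k ≤ n - 2 - k := by
  unfold c3
  calc ((Finset.range n).filter
        (fun j => k + 1 < j ∧ odd3 (ent σ k) (ent σ (k+1)) (ent σ j))).card
      ≤ (Finset.Ico (k+2) n).card := by
        apply Finset.card_le_card
        intro j hj
        simp only [mem_filter, mem_range] at hj
        simp only [mem_Ico]
        omega
    _ = n - (k+2) := Nat.card_Ico _ _
    _ ≤ n - 2 - k := by omega

lemma mem_key {a : ℕ} {R : Finset ℕ} (ha : a ∉ R) {b : ℕ} (hb : b ∈ R) {v : ℕ} :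
    v ∈ (R.erase b).filter (fun v => odd3 a b v) ↔
      v ∈ R ∧ v ≠ b ∧ ((a < b ∧ a < v ∧ v < b) ∨ (b < a ∧ (v < b ∨ a < v))) := by
  have hab : a ≠ b := fun h => ha (h ▸ hb)
  simp only [mem_filter, mem_erase]
  constructor
  · rintro ⟨⟨hvb, hvR⟩, hodd⟩
    have hav : a ≠ v := fun h => ha (h ▸ hvR)
    exact ⟨hvR, hvb, (odd3_iff hab hav (Ne.symm hvb)).mp hodd⟩
  · rintro ⟨hvR, hvb, h⟩
    have hav : a ≠ v := fun h => ha (h ▸ hvR)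
    exact ⟨⟨hvb, hvR⟩, (odd3_iff hab hav (Ne.symm hvb)).mpr h⟩

lemma key_lt {a : ℕ} {R : Finset ℕ} (ha : a ∉ R) {b b' : ℕ} (hb : b ∈ R) (hb' : b' ∈ R)
    (hcase : (a < b ∧ a < b' ∧ b < b') ∨ (b < a ∧ b' < a ∧ b < b') ∨ (b' < a ∧ a < b)) :
    ((R.erase b).filter (fun v => odd3 a b v)).card
      < ((R.erase b').filter (fun v => odd3 a b' v)).card := by
  apply Finset.card_lt_card
  rw [Finset.ssubset_iff_of_subset]
  · refine ⟨b, (mem_key ha hb').mpr ⟨hb, by omega, by omega⟩, fun hc => ?_⟩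
    obtain ⟨_, hne, _⟩ := (mem_key ha hb).mp hc
    exact hne rfl
  · intro v hv
    obtain ⟨h1, h2, h3⟩ := (mem_key ha hb).mp hv
    exact (mem_key ha hb').mpr ⟨h1, by omega, by omega⟩

lemma keyN {a : ℕ} {R : Finset ℕ} (ha : a ∉ R) {b b' : ℕ} (hb : b ∈ R) (hb' : b' ∈ R)
    (h : ((R.erase b).filter (fun v => odd3 a b v)).card
      = ((R.erase b').filter (fun v => odd3 a b' v)).card) : b = b' := by
  by_contra hne
  wlog hlt : b < b' generalizing b b' with H
  · exact H hb' hb h.symm (Ne.symm hne) (by omega)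
  have hab : a ≠ b := fun hx => ha (hx ▸ hb)
  have hab' : a ≠ b' := fun hx => ha (hx ▸ hb')
  rcases Nat.lt_or_ge a b with h1 | h1
  · have := key_lt ha hb hb' (Or.inl ⟨h1, by omega, hlt⟩)
    omega
  · rcases Nat.lt_or_ge b' a with h2 | h2
    · have := key_lt ha hb hb' (Or.inr (Or.inl ⟨by omega, h2, hlt⟩))
      omega
    · have := key_lt ha hb' hb (Or.inr (Or.inr ⟨by omega, by omega⟩))
      omega

lemma prod_fact : ∀ m : ℕ, ∏ i ∈ Finset.range (m - 1), (m - i) = Nat.factorial m := by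
  intro m
  induction m with
  | zero => simp
  | succ m ih =>
    cases m with
    | zero => simp
    | succ m' =>
      have ih' : ∏ i ∈ Finset.range m', (m' + 1 - i) = Nat.factorial (m' + 1) := by
        simpa using ih
      have hgoal : ∏ i ∈ Finset.range (m' + 1), (m' + 2 - i) = Nat.factorial (m' + 2) := by
        rw [Finset.prod_range_succ']
        rw [show (∏ i ∈ Finset.range m', (m' + 2 - (i + 1)))
            = ∏ i ∈ Finset.range m', (m' + 1 - i) from
          Finset.prod_congr rfl (fun i _ => by omega)]
        rw [ih']
        rw [show m' + 2 - 0 = m' + 2 from rfl, Nat.factorial_succ (m' + 1)]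
        ring
      simpa using hgoal

lemma decomposeFin_fst (m : ℕ) (σ : Equiv.Perm (Fin (m + 1))) :
    (Equiv.Perm.decomposeFin σ).1 = σ 0 := by
  have := Equiv.Perm.decomposeFin_symm_apply_zero
    (Equiv.Perm.decomposeFin σ).1 (Equiv.Perm.decomposeFin σ).2
  have h2 : σ 0 = (Equiv.Perm.decomposeFin σ).1 := by simpa using this
  exact h2.symm

lemma ent_zero_iff (m : ℕ) (σ : Equiv.Perm (Fin (m + 1))) :
    ent σ 0 = 0 ↔ σ 0 = 0 := by
  rw [ent_def σ (Nat.succ_pos m)]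
  constructor
  · intro h
    have : (⟨0, Nat.succ_pos m⟩ : Fin (m+1)) = 0 := rfl
    rw [this] at h
    exact Fin.ext h
  · intro h
    have : (⟨0, Nat.succ_pos m⟩ : Fin (m+1)) = 0 := rfl
    rw [this, h]
    rfl

lemma card_S (m : ℕ) :
    ((Finset.univ : Finset (Equiv.Perm (Fin (m + 1)))).filter (fun σ => ent σ 0 = 0)).card
      = Nat.factorial m := by
  rw [show (Nat.factorial m : ℕ) = (Finset.univ : Finset (Equiv.Perm (Fin m))).card by
    simp [Finset.card_univ, Fintype.card_perm]]
  apply Finset.card_bij (fun σ _ => (Equiv.Perm.decomposeFin σ).2)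
  · intro σ hσ; exact Finset.mem_univ _
  · intro σ hσ τ hτ hst
    simp only [Finset.mem_filter, Finset.mem_univ, true_and, ent_zero_iff] at hσ hτ
    have h1 : Equiv.Perm.decomposeFin σ = Equiv.Perm.decomposeFin τ := by
      have e1 : (Equiv.Perm.decomposeFin σ).1 = (Equiv.Perm.decomposeFin τ).1 := by
        rw [decomposeFin_fst, decomposeFin_fst, hσ, hτ]
      exact Prod.ext e1 hst
    exact Equiv.Perm.decomposeFin.injective h1
  · intro τ _
    refine ⟨Equiv.Perm.decomposeFin.symm (0, τ), ?_, ?_⟩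
    · simp only [Finset.mem_filter, Finset.mem_univ, true_and, ent_zero_iff]
      exact Equiv.Perm.decomposeFin_symm_apply_zero 0 τ
    · rw [Equiv.apply_symm_apply]

end Aux

theorem stmt5 (n : ℕ) :
    Set.BijOn (fun σ : Equiv.Perm (Fin n) => fun i : Fin (n - 2) => c3 σ (i : ℕ))
      {σ : Equiv.Perm (Fin n) | ent σ 0 = 0}
      {a : Fin (n - 2) → ℕ | ∀ i, a i ≤ n - 2 - (i : ℕ)} := by
  have hinj : ∀ σ τ : Equiv.Perm (Fin n), ent σ 0 = 0 → ent τ 0 = 0 →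
      (∀ i : Fin (n - 2), c3 σ (i : ℕ) = c3 τ (i : ℕ)) → σ = τ := by
    intro σ τ hσ hτ hc
    have key : ∀ k, ∀ j, j ≤ k → j < n → ent σ j = ent τ j := by
      intro k
      induction k with
      | zero =>
        intro j hj hjn
        have hj0 : j = 0 := Nat.le_zero.mp hj
        subst hj0
        rw [hσ, hτ]
      | succ k ih =>
        intro j hj hjn
        rcases Nat.lt_or_ge j (k + 1) with h | h
        · exact ih j (by omega) hjn
        · have hj' : j = k + 1 := by omega
          subst hj'
          have hpre : ∀ j' < k + 1, ent σ j' = ent τ j' := fun j' hj' =>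
            ih j' (by omega) (by omega)
          have hR : Rset σ (k + 1) = Rset τ (k + 1) :=
            Rset_congr σ τ (k + 1) (by omega) hpre
          have hbσ : ent σ (k + 1) ∈ Rset σ (k + 1) :=
            Finset.mem_image.mpr ⟨k + 1, Finset.mem_Ico.mpr ⟨le_refl _, by omega⟩, rfl⟩
          have hbτ : ent τ (k + 1) ∈ Rset σ (k + 1) := by
            rw [hR]
            exact Finset.mem_image.mpr ⟨k + 1, Finset.mem_Ico.mpr ⟨le_refl _, by omega⟩, rfl⟩
          rcases Nat.lt_or_ge (k + 2) n with hk2 | hk2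
          · have ha : ent σ k ∉ Rset σ (k + 1) := by
              intro hmem
              rw [Rset_eq σ (k + 1) (by omega), Finset.mem_sdiff] at hmem
              exact hmem.2 (Finset.mem_image.mpr ⟨k, Finset.mem_range.mpr (by omega), rfl⟩)
            have hck : c3 σ k = c3 τ k := hc ⟨k, by omega⟩
            rw [c3_eq σ k (by omega), c3_eq τ k (by omega)] at hck
            have hak : ent σ k = ent τ k := hpre k (by omega)
            rw [← hak, ← hR] at hck
            exact keyN ha hbσ hbτ hck
          · have hsing : Rset σ (k + 1) = {ent σ (k + 1)} := by
              unfold Rset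
              rw [show Finset.Ico (k + 1) n = {k + 1} by
                rw [show n = k + 2 by omega]
                ext x
                simp only [Finset.mem_Ico, Finset.mem_singleton]
                omega]
              rw [Finset.image_singleton]
            rw [hsing] at hbτ
            exact (Finset.mem_singleton.mp hbτ).symm
    apply Equiv.ext
    intro x
    have hk := key (x : ℕ) (x : ℕ) le_rfl x.isLt
    rw [ent_def σ x.isLt, ent_def τ x.isLt] at hk
    simp only [Fin.eta] at hk
    exact Fin.val_injective hk
  classical
  set T : Finset (Fin (n - 2) → ℕ) :=
    Fintype.piFinset (fun i : Fin (n - 2) => Finset.range (n - 1 - (i : ℕ))) with hT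
  set S : Finset (Equiv.Perm (Fin n)) := Finset.univ.filter (fun σ => ent σ 0 = 0) with hS
  have hSmem : ∀ σ : Equiv.Perm (Fin n), σ ∈ S ↔ ent σ 0 = 0 := by
    intro σ; rw [hS, Finset.mem_filter]; simp
  have hTmem : ∀ a : Fin (n - 2) → ℕ, a ∈ T ↔ ∀ i : Fin (n - 2), a i ≤ n - 2 - (i : ℕ) := by
    intro a
    rw [hT, Fintype.mem_piFinset]
    apply forall_congr'
    intro i
    rw [Finset.mem_range]
    have := i.isLt
    omega
  have hsub : S.image (fun σ : Equiv.Perm (Fin n) => fun i : Fin (n - 2) => c3 σ (i : ℕ)) ⊆ T := by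
    intro a ha
    obtain ⟨σ, hσ, rfl⟩ := Finset.mem_image.mp ha
    rw [hTmem]
    intro i
    exact c3_le σ (i : ℕ)
  have hinjS : Set.InjOn (fun σ : Equiv.Perm (Fin n) => fun i : Fin (n - 2) => c3 σ (i : ℕ)) ↑S := by
    intro σ hσ τ hτ h
    exact hinj σ τ ((hSmem σ).mp hσ) ((hSmem τ).mp hτ) (fun i => congrFun h i)
  have hScard : S.card = T.card := by
    rw [hT, Fintype.card_piFinset]
    simp only [Finset.card_range]
    cases n with
    | zero =>
      rw [hS, Finset.filter_true_of_mem]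
      · simp [Finset.card_univ, Fintype.card_perm]
      · intro σ _
        show ent σ 0 = 0
        unfold ent
        rw [dif_neg (by omega)]
    | succ m =>
      rw [hS, card_S m]
      rw [Fin.prod_univ_eq_prod_range (fun j => m + 1 - 1 - j) (m + 1 - 2)]
      rw [show m + 1 - 2 = m - 1 by omega]
      rw [show (fun j => m + 1 - 1 - j) = (fun j => m - j) by funext j; omega]
      exact (prod_fact m).symm
  have himg : S.image (fun σ : Equiv.Perm (Fin n) => fun i : Fin (n - 2) => c3 σ (i : ℕ)) = T := by
    apply Finset.eq_of_subset_of_card_le hsub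
    rw [Finset.card_image_of_injOn hinjS]
    exact le_of_eq hScard.symm
  refine ⟨?_, ?_, ?_⟩
  · intro σ hσ
    intro i
    exact c3_le σ (i : ℕ)
  · intro σ hσ τ hτ h
    exact hinj σ τ hσ hτ (fun i => congrFun h i)
  · intro a ha
    have haT : a ∈ T := (hTmem a).mpr ha
    rw [← himg] at haT
    obtain ⟨σ, hσ, rfl⟩ := Finset.mem_image.mp haT
    exact ⟨σ, (hSmem σ).mp hσ, rfl⟩
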